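/- arXiv:1501.00600 — 4 statements merged into one kernel-verified Lean document; each statement's English description precedes it below -/
import Mathlib

section
/- Consider the 3×7 matrix A with rows (1,0,0,1,1,0,1), (0,1,0,1,0,1,1), (0,0,1,0,1,1,1). Let t = ∛2 − 1 and define p ∈ ℝ^7 by p = (t, t, t, t², t², t², t³). Then p is strictly positive, its coordinates sum to 1, and p lies in the relational model generated by A, i.e. pᵢ = Πⱼ θⱼ^{a_{ji}} with θ = (t, t, t). -/
theorem stmt_10 (t : ℝ) (ht : t = (2:ℝ) ^ ((1:ℝ)/3) - 1)
    (A : Matrix (Fin 3) (Fin 7) ℝ)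
    (hA : A = !![1,0,0,1,1,0,1; 0,1,0,1,0,1,1; 0,0,1,0,1,1,1])
    (p : Fin 7 → ℝ) (hp : p = ![t, t, t, t^2, t^2, t^2, t^3]) :
    (∀ i, 0 < p i) ∧ (∑ i, p i = 1) ∧
    ∀ i, p i = ∏ j, (![t, t, t] : Fin 3 → ℝ) j ^ A j i := by
  have hc1 : (1:ℝ) < (2:ℝ) ^ ((1:ℝ)/3) := by
    apply Real.one_lt_rpow_iff_of_pos (by norm_num) |>.mpr
    norm_num
  have ht0 : 0 < t := by rw [ht]; linarith
  have hc3 : ((2:ℝ) ^ ((1:ℝ)/3)) ^ (3:ℕ) = 2 := by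
    rw [← Real.rpow_natCast ((2:ℝ) ^ ((1:ℝ)/3)) 3, ← Real.rpow_mul (by norm_num)]
    norm_num
  have hsum : 3*t + 3*t^2 + t^3 = 1 := by
    have : (t + 1)^3 = 2 := by rw [ht]; ring_nf; ring_nf at hc3; linarith
    nlinarith [this]
  have e5 : (![t, t, t, t^2, t^2, t^2, t^3] : Fin 7 → ℝ) 5 = t^2 := rfl
  have e6 : (![t, t, t, t^2, t^2, t^2, t^3] : Fin 7 → ℝ) 6 = t^3 := rfl
  have r15 : (![1,0,0,1,1,0,1] : Fin 7 → ℝ) 5 = 0 := rfl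
  have r16 : (![1,0,0,1,1,0,1] : Fin 7 → ℝ) 6 = 1 := rfl
  have r25 : (![0,1,0,1,0,1,1] : Fin 7 → ℝ) 5 = 1 := rfl
  have r26 : (![0,1,0,1,0,1,1] : Fin 7 → ℝ) 6 = 1 := rfl
  have r35 : (![0,0,1,0,1,1,1] : Fin 7 → ℝ) 5 = 1 := rfl
  have r36 : (![0,0,1,0,1,1,1] : Fin 7 → ℝ) 6 = 1 := rfl
  refine ⟨?_, ?_, ?_⟩
  · intro i
    subst hp
    fin_cases i <;> simp [Matrix.cons_val_succ, e5, e6] <;> positivity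
  · subst hp
    simp [Fin.sum_univ_seven, Matrix.cons_val_succ, e5, e6]
    linarith
  · intro i
    subst hp hA
    fin_cases i <;>
      simp [Fin.prod_univ_three, Matrix.cons_val_zero, Matrix.cons_val_one,
        Matrix.cons_val_succ, Matrix.vecHead, Matrix.vecTail, e5, e6, r15, r16, r25, r26, r35, r36,
        Real.rpow_zero, Real.rpow_one] <;> ring
end

section
/- Consider the 3×5 matrix A with rows (1,1,1,0,1), (1,1,0,0,1), (1,0,0,1,1). For n ≥ 1, let θ₁⁽ⁿ⁾ = 3/(3n+4), θ₂⁽ⁿ⁾ = n/2, θ₃⁽ⁿ⁾ = 1/4, and define p⁽ⁿ⁾ ∈ ℝ^5 by pᵢ⁽ⁿ⁾ = Πⱼ (θⱼ⁽ⁿ⁾)^{a_{ji}}. Then each p⁽ⁿ⁾ is a strictly positive probability vector (coordinates sum to 1), and p⁽ⁿ⁾ converges pointwise as n → ∞ to p₀ = (1/8, 1/2, 0, 1/4, 1/8). -/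
theorem stmt_13 (A : Matrix (Fin 3) (Fin 5) ℝ)
    (hA : A = !![1,1,1,0,1; 1,1,0,0,1; 1,0,0,1,1])
    (θ : ℕ → Fin 3 → ℝ)
    (hθ : ∀ n : ℕ, θ n = ![3 / (3 * (n:ℝ) + 4), (n:ℝ) / 2, 1/4])
    (p : ℕ → Fin 5 → ℝ)
    (hp : ∀ n i, p n i = ∏ j, θ n j ^ A j i)
    (p₀ : Fin 5 → ℝ) (hp₀ : p₀ = ![1/8, 1/2, 0, 1/4, 1/8]) :
    (∀ n : ℕ, 1 ≤ n → (∀ i, 0 < p n i) ∧ ∑ i, p n i = 1) ∧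
    ∀ i, Filter.Tendsto (fun n => p n i) Filter.atTop (nhds (p₀ i)) := by
  have hL : ∀ n : ℕ, (0:ℝ) < 3 * (n:ℝ) + 4 := by
    intro n; positivity
  have hθ0 : ∀ n : ℕ, θ n 0 = 3 / (3 * (n:ℝ) + 4) := by intro n; rw [hθ]; rfl
  have hθ1 : ∀ n : ℕ, θ n 1 = (n:ℝ) / 2 := by intro n; rw [hθ]; rfl
  have hθ2 : ∀ n : ℕ, θ n 2 = 1/4 := by intro n; rw [hθ]; rfl
  have hp' : ∀ n : ℕ, p n = ![1/8 - (1/2) / (3*(n:ℝ)+4),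
      1/2 - 2 / (3*(n:ℝ)+4), 3 / (3*(n:ℝ)+4), 1/4, 1/8 - (1/2) / (3*(n:ℝ)+4)] := by
    intro n
    funext i
    have hne := (hL n).ne'
    fin_cases i <;>
      simp [hp, Fin.prod_univ_three, hA, hθ0, hθ1, hθ2,
        Real.rpow_one, Real.rpow_zero, Matrix.cons_val_zero, Matrix.cons_val_one,
        Matrix.cons_val_two, Matrix.cons_val_three, Matrix.cons_val_four,
        Matrix.head_cons, Matrix.vecHead, Matrix.vecTail] <;>
      field_simp <;> ring
  constructor
  · intro n hn
    have hne := (hL n).ne'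
    have hn' : (1:ℝ) ≤ (n:ℝ) := by exact_mod_cast hn
    constructor
    · intro i
      fin_cases i <;> simp [hp'] <;>
        first
        | positivity
        | (rw [div_lt_iff₀ (hL n)]; nlinarith)
    · rw [Fin.sum_univ_five]
      simp [hp']
      field_simp
      ring
  · intro i
    have hLa : Filter.Tendsto (fun n : ℕ => 3 * (n:ℝ) + 4) Filter.atTop Filter.atTop := by
      apply Filter.tendsto_atTop_add_const_right
      exact (tendsto_natCast_atTop_atTop (R := ℝ)).const_mul_atTop (by norm_num)
    have hzero : ∀ c : ℝ, Filter.Tendsto (fun n : ℕ => c / (3 * (n:ℝ) + 4)) Filter.atTop (nhds 0) :=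
      fun c => Filter.Tendsto.div_atTop tendsto_const_nhds hLa
    have key : ∀ (a c : ℝ), Filter.Tendsto (fun n : ℕ => a - c / (3 * (n:ℝ) + 4)) Filter.atTop (nhds a) := by
      intro a c
      have := (tendsto_const_nhds (x := a) (f := Filter.atTop (α := ℕ))).sub (hzero c)
      simpa using this
    fin_cases i <;>
      simp only [hp', hp₀, Matrix.cons_val_zero, Matrix.cons_val_one,
        Matrix.cons_val_two, Matrix.cons_val_three, Matrix.cons_val_four,
        Matrix.head_cons, Matrix.vecHead, Matrix.vecTail, Matrix.tail_cons, Function.comp]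
    · exact key (1/8) (1/2)
    · exact key (1/2) 2
    · simpa [neg_div] using key 0 (-3)
    · exact tendsto_const_nhds
    · exact key (1/8) (1/2)
end

section
/- Let A be a J×I 0-1 matrix with columns aᵢ, let F ⊆ {1,…,I} be a facial set (i.e. there exists c ∈ ℝ^J with c'aᵢ = 0 for i ∈ F and c'aᵢ > 0 for i ∉ F), let A_F be the submatrix of columns in F, and let δ_F ∈ X_{A_F}. Then the vector δ ∈ ℝ^I defined by δᵢ = (δ_F)ᵢ for i ∈ F and δᵢ = 0 for i ∉ F belongs to X_A. -/
theorem stmt_14 {J I : ℕ} (A : Matrix (Fin J) (Fin I) ℝ)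
    (hA01 : ∀ j i, A j i = 0 ∨ A j i = 1)
    (F : Finset (Fin I)) (c : Fin J → ℝ)
    (hF0 : ∀ i ∈ F, ∑ j, c j * A j i = 0)
    (hF1 : ∀ i ∉ F, 0 < ∑ j, c j * A j i)
    (δF : {i // i ∈ F} → ℝ) (hδF : ∀ i, 0 ≤ δF i)
    (hXF : ∀ dF : {i // i ∈ F} → ℝ,
      (A.submatrix id (fun i : {i // i ∈ F} => (i : Fin I))).mulVec dF = 0 →
      ∏ i, δF i ^ max (dF i) 0 = ∏ i, δF i ^ max (-dF i) 0)
    (δ : Fin I → ℝ)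
    (hδ : ∀ i, δ i = if h : i ∈ F then δF ⟨i, h⟩ else 0) :
    (∀ i, 0 ≤ δ i) ∧
    ∀ d : Fin I → ℝ, A.mulVec d = 0 →
      ∏ i, δ i ^ max (d i) 0 = ∏ i, δ i ^ max (-d i) 0 := by
  constructor
  · intro i
    rw [hδ i]
    split
    · exact hδF _
    · exact le_refl 0
  intro d hd
  -- ∑ over all i of (∑ j, c j * A j i) * d i = 0
  have h0 : ∑ i, (∑ j, c j * A j i) * d i = 0 := by
    have h1 : ∀ j, A.mulVec d j = 0 := fun j => congrFun hd j
    calc ∑ i, (∑ j, c j * A j i) * d i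
        = ∑ j, c j * (A.mulVec d j) := by
          simp only [Matrix.mulVec, dotProduct, Finset.mul_sum, Finset.sum_mul]
          rw [Finset.sum_comm]
          apply Finset.sum_congr rfl
          intro i _
          apply Finset.sum_congr rfl
          intro j _
          ring
      _ = 0 := by simp [h1]
  have hsumF : ∑ i ∈ F, (∑ j, c j * A j i) * d i = 0 :=
    Finset.sum_eq_zero fun i hi => by rw [hF0 i hi, zero_mul]
  have hsumC : ∑ i ∈ Fᶜ, (∑ j, c j * A j i) * d i = 0 := by
    have hsplit := Finset.sum_compl_add_sum F (fun i => (∑ j, c j * A j i) * d i)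
    rw [hsumF, add_zero] at hsplit
    rw [hsplit, h0]
  by_cases hpos : ∃ i ∉ F, 0 < d i
  · obtain ⟨ip, hip, hdp⟩ := hpos
    -- there must also be a negative one
    by_cases hneg : ∃ i ∉ F, d i < 0
    · obtain ⟨im, him, hdm⟩ := hneg
      have hzL : ∏ i, δ i ^ max (d i) 0 = 0 := by
        apply Finset.prod_eq_zero (Finset.mem_univ ip)
        rw [hδ ip, dif_neg hip, max_eq_left hdp.le]
        exact Real.zero_rpow hdp.ne'
      have hzR : ∏ i, δ i ^ max (-d i) 0 = 0 := by
        apply Finset.prod_eq_zero (Finset.mem_univ im)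
        have : (0:ℝ) < -d im := by linarith
        rw [hδ im, dif_neg him, max_eq_left this.le]
        exact Real.zero_rpow this.ne'
      rw [hzL, hzR]
    · push_neg at hneg
      exfalso
      have hzero : ∀ i ∈ Fᶜ, (∑ j, c j * A j i) * d i = 0 := by
        intro i hi
        have hi' := Finset.mem_compl.mp hi
        exact (Finset.sum_eq_zero_iff_of_nonneg (fun i hi =>
          mul_nonneg (hF1 i (Finset.mem_compl.mp hi)).le (hneg i (Finset.mem_compl.mp hi)))).mp
          hsumC i hi
      have := hzero ip (Finset.mem_compl.mpr hip)
      have hne : (∑ j, c j * A j ip) ≠ 0 := (hF1 ip hip).ne'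
      have : d ip = 0 := by
        rcases mul_eq_zero.mp this with h | h
        · exact absurd h hne
        · exact h
      linarith
  · push_neg at hpos
    -- all d i = 0 off F
    have hdz : ∀ i ∉ F, d i = 0 := by
      intro i hi
      have hzero : ∀ i ∈ Fᶜ, (∑ j, c j * A j i) * d i = 0 := by
        have hsumC' : ∑ i ∈ Fᶜ, (∑ j, c j * A j i) * (-d i) = 0 := by
          simp only [mul_neg, Finset.sum_neg_distrib, hsumC, neg_zero]
        have h := (Finset.sum_eq_zero_iff_of_nonneg (fun i hi =>
          mul_nonneg (hF1 i (Finset.mem_compl.mp hi)).le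
            (by linarith [hpos i (Finset.mem_compl.mp hi)]))).mp hsumC'
        intro i hi
        have := h i hi
        have hne : (∑ j, c j * A j i) ≠ 0 := (hF1 i (Finset.mem_compl.mp hi)).ne'
        rcases mul_eq_zero.mp this with h' | h'
        · exact absurd h' hne
        · linarith
      have := hzero i (Finset.mem_compl.mpr hi)
      have hne : (∑ j, c j * A j i) ≠ 0 := (hF1 i hi).ne'
      rcases mul_eq_zero.mp this with h' | h'
      · exact absurd h' hne
      · exact h'
    -- restrict d to F
    set dF : {i // i ∈ F} → ℝ := fun i => d i with hdFdef
    have hker : (A.submatrix id (fun i : {i // i ∈ F} => (i : Fin I))).mulVec dF = 0 := by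
      funext j
      have hj : ∑ i, A j i * d i = 0 := congrFun hd j
      have hsplit := Finset.sum_compl_add_sum F (fun i => A j i * d i)
      have hc : ∑ i ∈ Fᶜ, A j i * d i = 0 :=
        Finset.sum_eq_zero fun i hi => by rw [hdz i (Finset.mem_compl.mp hi), mul_zero]
      rw [hc, zero_add, hj] at hsplit
      calc (A.submatrix id (fun i : {i // i ∈ F} => (i : Fin I))).mulVec dF j
          = ∑ i : {i // i ∈ F}, A j (i : Fin I) * d (i : Fin I) := rfl
        _ = ∑ i ∈ F, A j i * d i := Finset.sum_coe_sort F (fun i => A j i * d i)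
        _ = 0 := hsplit
    have hXFd := hXF dF hker
    have key : ∀ e : Fin I → ℝ, (∀ i ∉ F, e i = 0) →
        ∏ i, δ i ^ max (e i) 0 = ∏ i : {i // i ∈ F}, δF i ^ max (e (i : Fin I)) 0 := by
      intro e he
      rw [← Finset.prod_compl_mul_prod F]
      have h1 : ∏ i ∈ Fᶜ, δ i ^ max (e i) 0 = 1 :=
        Finset.prod_eq_one fun i hi => by
          rw [he i (Finset.mem_compl.mp hi), max_self, Real.rpow_zero]
      rw [h1, one_mul]
      rw [← Finset.prod_coe_sort F (fun i => δ i ^ max (e i) 0)]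
      apply Finset.prod_congr rfl
      intro i _
      rw [hδ (i : Fin I), dif_pos i.2]
    have hL := key d (fun i hi => hdz i hi)
    have hR := key (fun i => -d i) (fun i hi => by show -d i = 0; rw [hdz i hi, neg_zero])
    rw [hL, hR]
    exact hXFd
end

section
/- Let A be a J×I 0-1 matrix and q ∈ ℝ^I nonnegative. Suppose supp(q) is not contained in any facial set of A. Then Aq lies in the relative interior of the cone C_A = {Aδ : δ ≥ 0}; that is, there exists a strictly positive z ∈ ℝ^I with Az = Aq. -/
open Finset Matrix

theorem farkas_fin {κ : Type*} [Fintype κ] :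
    ∀ (n : ℕ) (a : Fin n → κ → ℝ) (b : κ → ℝ),
    (∃ lam : Fin n → ℝ, (∀ i, 0 ≤ lam i) ∧ ∑ i, lam i • a i = b) ∨
    (∃ y : κ → ℝ, (∀ i, 0 ≤ a i ⬝ᵥ y) ∧ b ⬝ᵥ y < 0) := by
  intro n
  induction n with
  | zero =>
    intro a b
    by_cases hb : b = 0
    · exact Or.inl ⟨0, fun i => le_refl _, by simp [hb]⟩
    · refine Or.inr ⟨-b, fun i => i.elim0, ?_⟩
      have h1 : 0 < b ⬝ᵥ b := by
        obtain ⟨x, hx⟩ : ∃ x, b x ≠ 0 := by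
          by_contra hc; push_neg at hc; exact hb (funext hc)
        refine Finset.sum_pos' (fun i _ => mul_self_nonneg (b i)) ⟨x, Finset.mem_univ x, ?_⟩
        exact mul_self_pos.2 hx
      simpa [dotProduct_neg] using neg_neg_iff_pos.2 h1
  | succ n ih =>
    intro a b
    set a' : Fin n → κ → ℝ := fun i => a i.castSucc with ha'
    set w : κ → ℝ := a (Fin.last n) with hwdef
    rcases ih a' b with ⟨lam, hlam, hsum⟩ | ⟨y, hy, hby⟩
    · refine Or.inl ⟨Fin.snoc lam 0, ?_, ?_⟩
      · intro i
        refine Fin.lastCases ?_ ?_ i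
        · simp
        · intro j; simpa using hlam j
      · rw [Fin.sum_univ_castSucc]
        simp [hsum]
        exact hsum
    · by_cases hw : 0 ≤ w ⬝ᵥ y
      · refine Or.inr ⟨y, ?_, hby⟩
        intro i
        refine Fin.lastCases hw hy i
      · push_neg at hw
        have hD : w ⬝ᵥ y ≠ 0 := ne_of_lt hw
        set r : (κ → ℝ) → ℝ := fun v => (v ⬝ᵥ y) / (w ⬝ᵥ y) with hr
        set a'' : Fin n → κ → ℝ := fun i => a' i - r (a' i) • w with ha''
        set b' : κ → ℝ := b - r b • w with hb'
        rcases ih a'' b' with ⟨lam, hlam, hsum⟩ | ⟨y', hy', hb'y⟩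
        · set mu : ℝ := r b - ∑ i, lam i * r (a' i) with hmu
          have hrb : 0 < r b := div_pos_of_neg_of_neg hby hw
          have hterm : ∀ i, lam i * r (a' i) ≤ 0 := fun i =>
            mul_nonpos_of_nonneg_of_nonpos (hlam i) (div_nonpos_of_nonneg_of_nonpos (hy i) hw.le)
          have hmupos : 0 ≤ mu := by
            have : ∑ i, lam i * r (a' i) ≤ 0 := Finset.sum_nonpos fun i _ => hterm i
            linarith
          refine Or.inl ⟨Fin.snoc lam mu, ?_, ?_⟩
          · intro i
            refine Fin.lastCases ?_ ?_ i
            · simpa using hmupos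
            · intro j; simpa using hlam j
          · rw [Fin.sum_univ_castSucc]
            simp only [Fin.snoc_castSucc, Fin.snoc_last]
            have h1 : ∑ i, lam i • a'' i = (∑ i, lam i • a' i) - (∑ i, lam i * r (a' i)) • w := by
              simp only [ha'', smul_sub, smul_smul, Finset.sum_sub_distrib, Finset.sum_smul]
            rw [hsum, hb'] at h1
            have h2 : ∑ i, lam i • a' i = b - r b • w + (∑ i, lam i * r (a' i)) • w := by
              rw [h1]; abel
            rw [h2, hmu, sub_smul]
            module
        · set y'' : κ → ℝ := y' - ((w ⬝ᵥ y') / (w ⬝ᵥ y)) • y with hy''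
          have key : ∀ v : κ → ℝ, v ⬝ᵥ y'' = (v - r v • w) ⬝ᵥ y' := by
            intro v
            rw [hy'', dotProduct_sub, dotProduct_smul, sub_dotProduct,
              smul_dotProduct, hr]
            field_simp
            ring
          refine Or.inr ⟨y'', ?_, ?_⟩
          · intro i
            refine Fin.lastCases ?_ ?_ i
            · rw [← hwdef, key w]
              have hrw : r w = 1 := by simp only [hr]; exact div_self hD
              rw [hrw, one_smul, sub_self, zero_dotProduct]
            · intro j
              rw [key (a j.castSucc)]
              exact hy' j
          · rw [key b]; exact hb'y

open Finset Matrix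

theorem farkas_general {ι κ : Type*} [Fintype ι] [Fintype κ] (a : ι → κ → ℝ) (b : κ → ℝ) :
    (∃ lam : ι → ℝ, (∀ i, 0 ≤ lam i) ∧ ∑ i, lam i • a i = b) ∨
    (∃ y : κ → ℝ, (∀ i, 0 ≤ a i ⬝ᵥ y) ∧ b ⬝ᵥ y < 0) := by
  set e := Fintype.equivFin ι with he
  rcases farkas_fin (Fintype.card ι) (a ∘ e.symm) b with ⟨lam, h1, h2⟩ | ⟨y, h1, h2⟩
  · refine Or.inl ⟨lam ∘ e, fun i => h1 (e i), ?_⟩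
    rw [← h2]
    exact Fintype.sum_equiv e _ _ (fun i => by simp)
  · exact Or.inr ⟨y, fun i => by simpa using h1 (e i), h2⟩

theorem stmt_15 {J I : ℕ} (A : Matrix (Fin J) (Fin I) ℝ)
    (hA01 : ∀ j i, A j i = 0 ∨ A j i = 1)
    (q : Fin I → ℝ) (hq : ∀ i, 0 ≤ q i)
    (h : ¬ ∃ (F : Set (Fin I)) (c : Fin J → ℝ), F ≠ Set.univ ∧
      (∀ i ∈ F, ∑ j, c j * A j i = 0) ∧ (∀ i ∉ F, 0 < ∑ j, c j * A j i) ∧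
      {i | 0 < q i} ⊆ F) :
    ∃ z : Fin I → ℝ, (∀ i, 0 < z i) ∧ A.mulVec z = A.mulVec q := by
  have key : ∀ i₀ : Fin I, ∃ z : Fin I → ℝ,
      (∀ k, 0 ≤ z k) ∧ A.mulVec z = A.mulVec q ∧ 0 < z i₀ := by
    intro i₀
    by_contra hno
    push_neg at hno
    -- generators of the homogenized cone
    set g : (Fin I ⊕ Bool) → (Option (Fin J) → ℝ) := fun s =>
      Sum.elim
        (fun k => Option.elim' (if k = i₀ then (1:ℝ) else 0) (fun j => A j k))
        (fun t => Option.elim' (0:ℝ) (fun j => (if t then 1 else -1) * A.mulVec q j)) s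
      with hg
    set b : Option (Fin J) → ℝ := Option.elim' 1 (fun j => A.mulVec q j) with hb
    rcases farkas_general g b with ⟨lam, hlam, hsum⟩ | ⟨y, hy, hby⟩
    · -- primal case: extract a feasible z with z i₀ > 0, contradiction with hno
      set z₀ : Fin I → ℝ := fun k => lam (Sum.inl k) with hz₀
      set mu : ℝ := lam (Sum.inr true) - lam (Sum.inr false) with hmu
      have hnone := congrFun hsum none
      have hz₀i₀ : z₀ i₀ = 1 := by
        simp only [Finset.sum_apply, Pi.smul_apply, smul_eq_mul, Fintype.sum_sum_type,
          hg, Sum.elim_inl, Sum.elim_inr, Option.elim', hb] at hnone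
        simpa [mul_ite, Finset.sum_ite_eq'] using hnone
      have hAz₀ : ∀ j, A.mulVec z₀ j = (1 - mu) * A.mulVec q j := by
        intro j
        have hj := congrFun hsum (some j)
        simp only [Finset.sum_apply, Pi.smul_apply, smul_eq_mul, Fintype.sum_sum_type,
          hg, Sum.elim_inl, Sum.elim_inr, Option.elim', hb, Fintype.sum_bool] at hj
        norm_num at hj
        have hmv : A.mulVec z₀ j = ∑ k, lam (Sum.inl k) * A j k := by
          simp only [Matrix.mulVec, dotProduct, hz₀]
          exact Finset.sum_congr rfl fun k _ => mul_comm _ _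
        rw [hmv, hmu]
        linear_combination hj
      have hz₀nn : ∀ k, 0 ≤ z₀ k := fun k => hlam (Sum.inl k)
      by_cases hmu1 : mu < 1
      · have h1mu : 0 < 1 - mu := by linarith
        refine absurd ?_ (not_le.2 (show (0:ℝ) < ((1-mu)⁻¹ • z₀) i₀ by
          simp only [Pi.smul_apply, smul_eq_mul, hz₀i₀, mul_one]
          positivity))
        refine hno _ (fun k => by
          simp only [Pi.smul_apply, smul_eq_mul]
          exact mul_nonneg (by positivity) (hz₀nn k)) ?_
        funext j
        simp only [Matrix.mulVec_smul, Pi.smul_apply, smul_eq_mul, hAz₀ j]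
        field_simp
      · push_neg at hmu1
        set z : Fin I → ℝ := fun k => q k + z₀ k + (mu - 1) * q k with hz
        have hzn : ∀ k, 0 ≤ z k := fun k => by
          have := hq k; have := hz₀nn k
          have : 0 ≤ (mu - 1) * q k := mul_nonneg (by linarith) (hq k)
          simp only [hz]; linarith [hq k, hz₀nn k]
        have hzeq : A.mulVec z = A.mulVec q := by
          funext j
          have : z = q + z₀ + (mu - 1) • q := by
            funext k; simp [hz, mul_comm]
          rw [this, Matrix.mulVec_add, Matrix.mulVec_add, Matrix.mulVec_smul]
          simp only [Pi.add_apply, Pi.smul_apply, smul_eq_mul, hAz₀ j]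
          ring
        have hzi₀ : 0 < z i₀ := by
          have h1 : 0 ≤ (mu - 1) * q i₀ := mul_nonneg (by linarith) (hq i₀)
          simp only [hz, hz₀i₀]; linarith [hq i₀]
        exact absurd (hno z hzn hzeq) (not_le.2 hzi₀)
    · -- dual case: build a facial set, contradiction with h
      set c : Fin J → ℝ := fun j => y (some j) with hc
      set ga : ℝ := y none with hga
      have hdot : ∀ k : Fin I, 0 ≤ (if k = i₀ then 1 else 0) * ga + ∑ j, A j k * c j := by
        intro k
        have := hy (Sum.inl k)
        simpa [dotProduct, hg, Option.elim', Fintype.sum_option, hc, hga] using this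
      have hS0 : ∑ j, A.mulVec q j * c j = 0 := by
        have h1 := hy (Sum.inr true)
        have h2 := hy (Sum.inr false)
        simp only [dotProduct, hg, Sum.elim_inr, Option.elim', Fintype.sum_option,
          if_true, if_false, Bool.false_eq_true] at h1 h2
        norm_num at h1 h2
        exact le_antisymm h2 h1
      have hganeg : ga < 0 := by
        have := hby
        simp only [dotProduct, hb, Option.elim', Fintype.sum_option, one_mul] at this
        have : ga + ∑ j, A.mulVec q j * c j < 0 := this
        linarith [hS0]
      -- nonnegativity of c'aᵢ for every i, strict at i₀
      have hnn : ∀ k : Fin I, 0 ≤ ∑ j, c j * A j k := by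
        intro k
        have hd := hdot k
        have hcomm : ∑ j, A j k * c j = ∑ j, c j * A j k :=
          Finset.sum_congr rfl fun j _ => mul_comm _ _
        rw [hcomm] at hd
        by_cases hk : k = i₀
        · subst hk
          simp at hd
          linarith
        · simp only [if_neg hk, zero_mul, zero_add] at hd
          exact hd
      have hpos : 0 < ∑ j, c j * A j i₀ := by
        have hd := hdot i₀
        have hcomm : ∑ j, A j i₀ * c j = ∑ j, c j * A j i₀ :=
          Finset.sum_congr rfl fun j _ => mul_comm _ _
        rw [hcomm] at hd
        simp at hd
        linarith
      -- supp(q) has zero inner products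
      have hswap : ∑ i, q i * ∑ j, c j * A j i = 0 := by
        rw [← hS0]
        simp only [Matrix.mulVec, dotProduct, Finset.sum_mul, Finset.mul_sum]
        rw [Finset.sum_comm]
        exact Finset.sum_congr rfl fun i _ => Finset.sum_congr rfl fun j _ => by ring
      have hsupp : ∀ i : Fin I, 0 < q i → ∑ j, c j * A j i = 0 := by
        intro i hi
        have hterm : ∀ k ∈ Finset.univ, 0 ≤ q k * ∑ j, c j * A j k :=
          fun k _ => mul_nonneg (hq k) (hnn k)
        have := (Finset.sum_eq_zero_iff_of_nonneg hterm).1 hswap i (Finset.mem_univ i)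
        rcases mul_eq_zero.1 this with h0 | h0
        · exact absurd h0 (ne_of_gt hi)
        · exact h0
      refine h ⟨{i | ∑ j, c j * A j i = 0}, c, ?_, fun i hi => hi, ?_, fun i hi => hsupp i hi⟩
      · rw [Set.ne_univ_iff_exists_notMem]
        exact ⟨i₀, fun h0 => (ne_of_gt hpos) h0⟩
      · intro i hi
        exact lt_of_le_of_ne (hnn i) fun h0 => hi h0.symm
  -- assemble
  cases isEmpty_or_nonempty (Fin I) with
  | inl hemp =>
    exact ⟨q, fun i => isEmptyElim i, rfl⟩
  | inr hne =>
    choose w hw using key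
    have hIpos : 0 < I := by
      rcases hne with ⟨i⟩; exact i.pos
    refine ⟨(I:ℝ)⁻¹ • ∑ i, w i, ?_, ?_⟩
    · intro k
      simp only [Pi.smul_apply, smul_eq_mul, Finset.sum_apply]
      refine mul_pos (by positivity) ?_
      exact Finset.sum_pos' (fun i _ => (hw i).1 k) ⟨k, Finset.mem_univ k, (hw k).2.2⟩
    · have hmsum : A.mulVec (∑ i, w i) = ∑ i, A.mulVec (w i) := by
        simp only [← Matrix.mulVecLin_apply, map_sum]
      rw [Matrix.mulVec_smul, hmsum]
      have h3 : ∑ i : Fin I, A.mulVec (w i) = (I : ℕ) • A.mulVec q := by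
        rw [Finset.sum_congr rfl fun i _ => (hw i).2.1]
        simp
      rw [h3, ← Nat.cast_smul_eq_nsmul ℝ, smul_smul, inv_mul_cancel₀ (by positivity), one_smul]
end
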